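/- Suppose (a_k)_{k≥1} is a nonnegative sequence with partial tails T(n) = ∑_{k=n}^∞ a_k ≤ 1, and define M(h) = ∑_{k=1}^∞ (1 - e^{-k h})·a_k. Assume there are constants 0 < c ≤ C such that c/√n ≤ M(1/n) ≤ C/√n for all n ≥ 1, and that T(n) ≤ C̃/√n with C̃ = (1-e^{-1})^{-1}C. Then for every ε > 0 with c√ε - 2εC(1-e^{-1})^{-1} > 0, one has T(n) ≥ (c√ε - 2εC(1-e^{-1})^{-1})/√n for all n ≥ 1. -/

import Mathlib

private lemma sqrt_inv_sum_le' (N : ℕ) :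
    ∑ l ∈ Finset.range N, 1 / Real.sqrt (l + 1) ≤ 2 * Real.sqrt N := by
  induction N with
  | zero => simp
  | succ N ih =>
    rw [Finset.sum_range_succ]
    have hv : (0:ℝ) < Real.sqrt (N + 1) := Real.sqrt_pos.2 (by positivity)
    have hu2 : Real.sqrt N ^ 2 = (N:ℝ) := Real.sq_sqrt (by positivity)
    have hv2 : Real.sqrt (N + 1) ^ 2 = (N:ℝ) + 1 := Real.sq_sqrt (by positivity)
    have key : 1 / Real.sqrt ((N:ℝ) + 1) ≤ 2 * Real.sqrt (N + 1) - 2 * Real.sqrt N := by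
      rw [div_le_iff₀ hv]
      nlinarith [sq_nonneg (Real.sqrt (N + 1) - Real.sqrt N)]
    have hcast : ((N:ℝ) + 1) = ((N + 1 : ℕ) : ℝ) := by push_cast; ring
    calc ∑ l ∈ Finset.range N, 1 / Real.sqrt (l + 1) + 1 / Real.sqrt ((N:ℝ) + 1)
        ≤ 2 * Real.sqrt N + (2 * Real.sqrt (N + 1) - 2 * Real.sqrt N) := add_le_add ih key
      _ = 2 * Real.sqrt ((N + 1 : ℕ) : ℝ) := by rw [← hcast]; ring

private lemma key_arith' (c Ct ε x m : ℝ) (hc : 0 < c) (hcCt : c ≤ Ct) (hε : 0 < ε)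
    (hse2 : c * Real.sqrt ε ≤ 2 * Ct) (hx : 1 ≤ x)
    (hmlb : x / ε ≤ m) (hmub : m ≤ x / ε + 1) :
    (c * Real.sqrt ε - 2 * ε * Ct) / Real.sqrt x
      ≤ c / Real.sqrt m - 2 * Ct * Real.sqrt (x - 1) / m := by
  have hx0 : (0:ℝ) < x := by linarith
  have hm0 : (0:ℝ) < m := lt_of_lt_of_le (by positivity) hmlb
  have hCt : 0 < Ct := lt_of_lt_of_le hc hcCt
  have hxm : x ≤ ε * m := by
    have := mul_le_mul_of_nonneg_left hmlb hε.le
    rwa [mul_div_cancel₀ _ hε.ne'] at this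
  have hmx : ε * m ≤ x + ε := by
    have := mul_le_mul_of_nonneg_left hmub hε.le
    rw [mul_add, mul_div_cancel₀ _ hε.ne', mul_one] at this
    linarith
  set se := Real.sqrt ε with hse_def
  set sx := Real.sqrt x with hsx_def
  set sm := Real.sqrt m with hsm_def
  set s1 := Real.sqrt (x - 1) with hs1_def
  set s2 := Real.sqrt (x + ε) with hs2_def
  have hse0 : 0 < se := Real.sqrt_pos.2 hε
  have hsx0 : 0 < sx := Real.sqrt_pos.2 hx0
  have hsm0 : 0 < sm := Real.sqrt_pos.2 hm0
  have hs10 : 0 ≤ s1 := Real.sqrt_nonneg _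
  have hs20 : 0 < s2 := Real.sqrt_pos.2 (by linarith)
  have hseq : se ^ 2 = ε := Real.sq_sqrt hε.le
  have hsxq : sx ^ 2 = x := Real.sq_sqrt hx0.le
  have hsmq : sm ^ 2 = m := Real.sq_sqrt hm0.le
  have hs1q : s1 ^ 2 = x - 1 := Real.sq_sqrt (by linarith)
  have hs2q : s2 ^ 2 = x + ε := Real.sq_sqrt (by positivity)
  have hs1sx : s1 ≤ sx := Real.sqrt_le_sqrt (by linarith)
  have hsxs2 : sx ≤ s2 := Real.sqrt_le_sqrt (by linarith)
  have hsesm : se * sm ≤ s2 := by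
    rw [← Real.sqrt_mul hε.le]
    exact Real.sqrt_le_sqrt hmx
  have hA : c * se / s2 ≤ c / sm := by
    rw [div_le_div_iff₀ hs20 hsm0]
    nlinarith
  have hB : 2 * Ct * s1 / m ≤ 2 * Ct * ε * s1 / x := by
    rw [div_le_div_iff₀ hm0 hx0]
    nlinarith [mul_le_mul_of_nonneg_left hxm (mul_nonneg (by positivity : (0:ℝ) ≤ 2 * Ct) hs10)]
  have h1 : (s2 - sx) * (s2 + sx) = ε := by linear_combination hs2q - hsxq
  have h2 : (sx - s1) * (sx + s1) = 1 := by linear_combination hsxq - hs1q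
  have e1 : c * se / sx - c * se / s2 ≤ c * se * ε / (2 * x * sx) := by
    rw [div_sub_div _ _ hsx0.ne' hs20.ne', div_le_div_iff₀ (by positivity) (by positivity)]
    have key : 2 * x ≤ (s2 + sx) * s2 := by nlinarith [mul_le_mul_of_nonneg_left hsxs2 hsx0.le]
    calc (c * se * s2 - sx * (c * se)) * (2 * x * sx)
        = (c * se * sx * (s2 - sx)) * (2 * x) := by ring
      _ ≤ (c * se * sx * (s2 - sx)) * ((s2 + sx) * s2) := by
          apply mul_le_mul_of_nonneg_left key
          have : 0 ≤ s2 - sx := sub_nonneg.2 hsxs2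
          positivity
      _ = c * se * ε * (sx * s2) := by linear_combination (c * se * sx * s2) * h1
  have e2 : 2 * Ct * ε / (2 * x * sx) ≤ 2 * Ct * ε / sx - 2 * Ct * ε * s1 / x := by
    rw [div_sub_div _ _ hsx0.ne' hx0.ne', div_le_div_iff₀ (by positivity) (by positivity)]
    have hexp : 2 * sx * s1 ≤ sx ^ 2 + s1 ^ 2 := two_mul_le_add_sq sx s1
    have key2 : 1 ≤ 2 * (x - sx * s1) := by linarith
    have h3 : 0 ≤ 2 * Ct * ε * x * sx := by positivity
    linarith [mul_le_mul_of_nonneg_left key2 h3]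
  have e3 : c * se * ε / (2 * x * sx) ≤ 2 * Ct * ε / (2 * x * sx) := by
    have hnum : c * se * ε ≤ 2 * Ct * ε := mul_le_mul_of_nonneg_right hse2 hε.le
    gcongr
  have expand : (c * se - 2 * ε * Ct) / sx = c * se / sx - 2 * Ct * ε / sx := by
    rw [sub_div]; ring_nf
  rw [expand]
  linarith

theorem tail_lower_bound_from_magnetization (a : ℕ → ℝ)
    (ha0 : a 0 = 0) (hpos : ∀ k, 0 ≤ a k) (hsum : Summable a)
    (T : ℕ → ℝ) (hT : ∀ n, T n = ∑' k : {k : ℕ // n ≤ k}, a k.1)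
    (hT1 : ∀ n : ℕ, 1 ≤ n → T n ≤ 1)
    (M : ℝ → ℝ)
    (hM : ∀ h : ℝ, M h = ∑' k : ℕ, (1 - Real.exp (-(k : ℝ) * h)) * a k)
    (c C : ℝ) (hc : 0 < c) (hcC : c ≤ C)
    (hMlow : ∀ n : ℕ, 1 ≤ n → c / Real.sqrt n ≤ M (1 / n))
    (hMup : ∀ n : ℕ, 1 ≤ n → M (1 / n) ≤ C / Real.sqrt n)
    (hTup : ∀ n : ℕ, 1 ≤ n → T n ≤ (1 - Real.exp (-1))⁻¹ * C / Real.sqrt n) :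
    ∀ ε : ℝ, 0 < ε →
      0 < c * Real.sqrt ε - 2 * ε * C * (1 - Real.exp (-1))⁻¹ →
      ∀ n : ℕ, 1 ≤ n →
        (c * Real.sqrt ε - 2 * ε * C * (1 - Real.exp (-1))⁻¹) / Real.sqrt n ≤ T n := by
  have hTsum : ∀ j : ℕ, T j = ∑' k : ℕ, a (k + j) := by
    intro j
    rw [hT]
    exact (Equiv.tsum_eq
      (⟨fun k => ⟨k + j, Nat.le_add_left _ _⟩, fun k => k.1 - j,
        fun k => by simp, fun k => by ext; exact Nat.sub_add_cancel k.2⟩ :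
        ℕ ≃ {k : ℕ // j ≤ k}) fun k => a k.1).symm
  set Ct : ℝ := (1 - Real.exp (-1))⁻¹ * C with hCt_def
  have hexp1 : Real.exp (-1) < 1 := Real.exp_lt_one_iff.2 (by norm_num)
  have hfac : 0 < 1 - Real.exp (-1) := by linarith
  have hfac1 : 1 - Real.exp (-1) ≤ 1 := by
    have := Real.exp_pos (-1); linarith
  have hC0 : 0 < C := lt_of_lt_of_le hc hcC
  have hCt0 : 0 < Ct := by positivity
  have hCCt : C ≤ Ct := by
    rw [hCt_def]
    nlinarith [(one_le_inv₀ hfac).2 hfac1]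
  have hcCt : c ≤ Ct := le_trans hcC hCCt
  intro ε hε hconst n hn
  have hconst' : 0 < c * Real.sqrt ε - 2 * ε * Ct := by
    have heq : c * Real.sqrt ε - 2 * ε * Ct
        = c * Real.sqrt ε - 2 * ε * C * (1 - Real.exp (-1))⁻¹ := by
      rw [hCt_def]; ring
    linarith [heq ▸ hconst]
  -- c √ε ≤ 2 Ct
  have hse0 : 0 < Real.sqrt ε := Real.sqrt_pos.2 hε
  have hseq : Real.sqrt ε ^ 2 = ε := Real.sq_sqrt hε.le
  have hse2 : c * Real.sqrt ε ≤ 2 * Ct := by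
    have h1 : 2 * ε * Ct < c * Real.sqrt ε := by linarith
    have h2 : c * Real.sqrt ε ≤ Ct * Real.sqrt ε :=
      mul_le_mul_of_nonneg_right hcCt hse0.le
    have h3 : 2 * ε < Real.sqrt ε := by
      have := mul_lt_mul_of_pos_right (lt_of_lt_of_le h1 h2) (inv_pos.2 hCt0)
      calc 2 * ε = 2 * ε * Ct * Ct⁻¹ := by field_simp
        _ < Ct * Real.sqrt ε * Ct⁻¹ := this
        _ = Real.sqrt ε := by field_simp
    have hse_half : Real.sqrt ε < 1 / 2 := by nlinarith
    nlinarith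
  -- set up m
  set x : ℝ := (n : ℝ) with hx_def
  have hx1 : (1:ℝ) ≤ x := by rw [hx_def]; exact_mod_cast hn
  have hx0 : (0:ℝ) < x := by linarith
  set m : ℕ := ⌈x / ε⌉₊ with hm_def
  have hmlb : x / ε ≤ (m:ℝ) := Nat.le_ceil _
  have hmub : (m:ℝ) ≤ x / ε + 1 := (Nat.ceil_lt_add_one (by positivity)).le
  have hm1 : 1 ≤ m := by
    rw [hm_def]
    exact Nat.one_le_ceil_iff.2 (by positivity)
  have hm0 : (0:ℝ) < (m:ℝ) := by exact_mod_cast hm1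
  -- the function f
  set f : ℕ → ℝ := fun k => (1 - Real.exp (-(k : ℝ) * (1 / (m:ℝ)))) * a k with hf_def
  have hf0 : ∀ k, 0 ≤ f k := by
    intro k
    apply mul_nonneg _ (hpos k)
    have : Real.exp (-(k : ℝ) * (1 / (m:ℝ))) ≤ 1 := by
      rw [Real.exp_le_one_iff]
      have : (0:ℝ) ≤ (k:ℝ) * (1 / (m:ℝ)) := by positivity
      linarith
    linarith
  have hfle : ∀ k, f k ≤ a k := by
    intro k
    apply mul_le_of_le_one_left (hpos k)
    have := (Real.exp_pos (-(k : ℝ) * (1 / (m:ℝ)))).le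
    linarith
  have hfsum : Summable f := Summable.of_nonneg_of_le hf0 hfle hsum
  -- split
  have hsplit : ∑' i, f i = ∑ i ∈ Finset.range n, f i + ∑' i, f (i + n) :=
    (Summable.sum_add_tsum_nat_add n hfsum).symm
  -- tail bound
  have htail : ∑' i, f (i + n) ≤ T n := by
    rw [hTsum n]
    exact Summable.tsum_le_tsum (fun k => hfle (k + n))
      ((summable_nat_add_iff n).2 hfsum) ((summable_nat_add_iff n).2 hsum)
  -- head bound
  set S : ℝ := ∑ k ∈ Finset.range n, (k:ℝ) * a k with hS_def
  have hhead : ∑ i ∈ Finset.range n, f i ≤ (1 / (m:ℝ)) * S := by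
    rw [hS_def, Finset.mul_sum]
    apply Finset.sum_le_sum
    intro i _
    have hbound : 1 - Real.exp (-(i : ℝ) * (1 / (m:ℝ))) ≤ (i:ℝ) * (1 / (m:ℝ)) := by
      have := Real.add_one_le_exp (-(i : ℝ) * (1 / (m:ℝ)))
      linarith
    calc f i ≤ ((i:ℝ) * (1 / (m:ℝ))) * a i :=
          mul_le_mul_of_nonneg_right hbound (hpos i)
      _ = 1 / (m:ℝ) * ((i:ℝ) * a i) := by ring
  -- Abel: S ≤ ∑_{l ∈ range (n-1)} T (l+1)
  have habel : S ≤ ∑ l ∈ Finset.range (n - 1), T (l + 1) := by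
    have step1 : S = ∑ l ∈ Finset.range n, ∑ k ∈ Finset.Ico (l+1) n, a k := by
      rw [hS_def]
      have h1 : ∀ k ∈ Finset.range n, (k:ℝ) * a k
          = ∑ l ∈ Finset.range n, if l < k then a k else 0 := by
        intro k hk
        rw [← Finset.sum_filter]
        have hfil : (Finset.range n).filter (· < k) = Finset.range k := by
          ext l
          simp only [Finset.mem_filter, Finset.mem_range]
          have := Finset.mem_range.1 hk
          omega
        rw [hfil, Finset.sum_const, Finset.card_range, nsmul_eq_mul]
      rw [Finset.sum_congr rfl h1, Finset.sum_comm]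
      apply Finset.sum_congr rfl
      intro l _
      rw [← Finset.sum_filter]
      congr 1
      ext k
      simp only [Finset.mem_filter, Finset.mem_range, Finset.mem_Ico]
      omega
    have step2 : ∑ l ∈ Finset.range n, ∑ k ∈ Finset.Ico (l+1) n, a k
        = ∑ l ∈ Finset.range (n - 1), ∑ k ∈ Finset.Ico (l+1) n, a k := by
      obtain ⟨n', rfl⟩ : ∃ n', n = n' + 1 := ⟨n - 1, by omega⟩
      rw [Finset.sum_range_succ]
      simp
    rw [step1, step2]
    apply Finset.sum_le_sum
    intro l _
    rw [hTsum (l + 1), Finset.sum_Ico_eq_sum_range]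
    have hs : Summable (fun k => a (k + (l+1))) := (summable_nat_add_iff (l+1)).2 hsum
    calc ∑ i ∈ Finset.range (n - (l+1)), a (l + 1 + i)
        = ∑ i ∈ Finset.range (n - (l+1)), a (i + (l+1)) := by
          apply Finset.sum_congr rfl; intro i _; rw [add_comm]
      _ ≤ ∑' k : ℕ, a (k + (l+1)) := Summable.sum_le_tsum _ (fun i _ => hpos _) hs
  -- T (l+1) ≤ Ct / √(l+1), sum bound
  have hSbound : S ≤ 2 * Ct * Real.sqrt (x - 1) := by
    have hstep : ∑ l ∈ Finset.range (n - 1), T (l + 1)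
        ≤ ∑ l ∈ Finset.range (n - 1), Ct * (1 / Real.sqrt (l + 1)) := by
      apply Finset.sum_le_sum
      intro l _
      have h := hTup (l + 1) (Nat.le_add_left _ _)
      calc T (l + 1) ≤ Ct / Real.sqrt ((l + 1 : ℕ) : ℝ) := h
        _ = Ct * (1 / Real.sqrt ((l:ℝ) + 1)) := by push_cast; ring
    have hsum2 : ∑ l ∈ Finset.range (n - 1), Ct * (1 / Real.sqrt (l + 1))
        ≤ Ct * (2 * Real.sqrt ((n - 1 : ℕ) : ℝ)) := by
      rw [← Finset.mul_sum]
      exact mul_le_mul_of_nonneg_left (sqrt_inv_sum_le' (n - 1)) hCt0.le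
    have hcast : ((n - 1 : ℕ) : ℝ) = x - 1 := by
      rw [hx_def]
      push_cast [Nat.cast_sub hn]
      ring
    calc S ≤ ∑ l ∈ Finset.range (n - 1), T (l + 1) := habel
      _ ≤ Ct * (2 * Real.sqrt ((n - 1 : ℕ) : ℝ)) := le_trans hstep hsum2
      _ = 2 * Ct * Real.sqrt (x - 1) := by rw [hcast]; ring
  -- M lower bound at 1/m
  have hMm : c / Real.sqrt m ≤ M (1 / (m:ℝ)) := hMlow m hm1
  have hMeq : M (1 / (m:ℝ)) = ∑' i, f i := by rw [hM]
  -- combine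
  have hmain : c / Real.sqrt m - 2 * Ct * Real.sqrt (x - 1) / (m:ℝ) ≤ T n := by
    have h1 : (1 / (m:ℝ)) * S ≤ 2 * Ct * Real.sqrt (x - 1) / (m:ℝ) := by
      rw [one_div, inv_mul_eq_div]
      gcongr
    have h2 : M (1 / (m:ℝ)) ≤ (1 / (m:ℝ)) * S + T n := by
      rw [hMeq, hsplit]
      exact add_le_add hhead htail
    linarith
  -- final arithmetic
  have hfin := key_arith' c Ct ε x (m:ℝ) hc hcCt hε hse2 hx1 hmlb hmub
  have hgoal : (c * Real.sqrt ε - 2 * ε * C * (1 - Real.exp (-1))⁻¹) / Real.sqrt x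
      = (c * Real.sqrt ε - 2 * ε * Ct) / Real.sqrt x := by
    rw [hCt_def]; ring
  rw [hx_def] at hgoal ⊢
  rw [hgoal]
  linarith
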